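/- Assume (A0) and assumption (A1): Σ_{k≥1} 1/a_k = ∞. Then either 𝒱 has at most one element, or v_0 = 0. -/

import Mathlib

open Finset Filter Topology MeasureTheory
open scoped ENNReal

/-- `alphaSeq a b k = (a_1 ⋯ a_k)/(b_1 ⋯ b_k)`, with `alphaSeq a b 0 = 1`. -/
noncomputable def alphaSeq (a b : ℕ → ℝ) (k : ℕ) : ℝ :=
  ∏ i ∈ Finset.Icc 1 k, (a i / b i)

/-- `betaSeq a b k = 1/b_k + a_k/(b_k b_{k-1}) + ⋯ + (a_k ⋯ a_2)/(b_k ⋯ b_1)`,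
with `betaSeq a b 0 = 0`. -/
noncomputable def betaSeq (a b : ℕ → ℝ) (k : ℕ) : ℝ :=
  ∑ j ∈ Finset.Icc 1 k, (∏ i ∈ Finset.Icc (j+1) k, a i) / (∏ i ∈ Finset.Icc j k, b i)

/-- The stable traffic equation: `ρ 0 = 1` and
`(b_i + a_{i+1}) ρ_i = a_i ρ_{i-1} + b_{i+1} ρ_{i+1}` for all `i ≥ 1`. -/
def IsSTE (a b : ℕ → ℝ) (ρ : ℕ → ℝ) : Prop :=
  ρ 0 = 1 ∧ ∀ i, 1 ≤ i → (b i + a (i+1)) * ρ i = a i * ρ (i-1) + b (i+1) * ρ (i+1)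

/-- An admissible solution of the stable traffic equation: moreover `ρ k ∈ (0,1)` for `k ≥ 1`. -/
def IsAdmissible (a b : ℕ → ℝ) (ρ : ℕ → ℝ) : Prop :=
  IsSTE a b ρ ∧ ∀ k, 1 ≤ k → ρ k ∈ Set.Ioo (0:ℝ) 1

/-- The set `𝒱` of `v` such that `α + v β` is an admissible solution. -/
def speedSet (a b : ℕ → ℝ) : Set ℝ :=
  {v : ℝ | IsAdmissible a b (fun k => alphaSeq a b k + v * betaSeq a b k)}

namespace Stmt8Aux

variable {a b : ℕ → ℝ}

lemma alpha_pos (ha : ∀ k, 1 ≤ k → 0 < a k) (hb : ∀ k, 1 ≤ k → 0 < b k) (k : ℕ) :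
    0 < alphaSeq a b k := by
  apply Finset.prod_pos
  intro i hi
  rw [Finset.mem_Icc] at hi
  exact div_pos (ha i hi.1) (hb i hi.1)

lemma beta_pos (ha : ∀ k, 1 ≤ k → 0 < a k) (hb : ∀ k, 1 ≤ k → 0 < b k) {k : ℕ} (hk : 1 ≤ k) :
    0 < betaSeq a b k := by
  apply Finset.sum_pos
  · intro j hj
    rw [Finset.mem_Icc] at hj
    apply div_pos
    · apply Finset.prod_pos
      intro i hi
      rw [Finset.mem_Icc] at hi
      exact ha i (le_trans (Nat.le_add_left 1 j) hi.1)
    · apply Finset.prod_pos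
      intro i hi
      rw [Finset.mem_Icc] at hi
      exact hb i (le_trans hj.1 hi.1)
  · exact Finset.nonempty_Icc.mpr hk

lemma term_eq (ha : ∀ k, 1 ≤ k → 0 < a k) (hb : ∀ k, 1 ≤ k → 0 < b k)
    {m k : ℕ} (hmk : m + 1 ≤ k) :
    (∏ i ∈ Finset.Icc (m+1+1) k, a i) / (∏ i ∈ Finset.Icc (m+1) k, b i)
      = alphaSeq a b k / (alphaSeq a b m * a (m+1)) := by
  have hIoc : ∀ n : ℕ, Finset.Icc (n+1) k = Finset.Ioc n k := fun n => Finset.Icc_add_one_left_eq_Ioc n k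
  have hmk' : m ≤ k := le_trans (Nat.le_succ m) hmk
  have hPb : 0 < ∏ i ∈ Finset.Ioc m k, b i := by
    apply Finset.prod_pos
    intro i hi
    rw [Finset.mem_Ioc] at hi
    exact hb i (le_trans (Nat.succ_le_succ (Nat.zero_le m)) hi.1)
  have hαm : 0 < alphaSeq a b m := alpha_pos ha hb m
  have hαk : 0 < alphaSeq a b k := alpha_pos ha hb k
  have ham1 : 0 < a (m+1) := ha (m+1) (Nat.le_add_left 1 m)
  have hsplit : alphaSeq a b m * ∏ i ∈ Finset.Ioc m k, (a i / b i) = alphaSeq a b k := by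
    unfold alphaSeq
    rw [hIoc 0]
    exact Finset.prod_Ioc_consecutive _ (Nat.zero_le m) hmk'
  have hasplit : a (m+1) * ∏ i ∈ Finset.Ioc (m+1) k, a i = ∏ i ∈ Finset.Ioc m k, a i := by
    have h1 : Finset.Ioc m (m+1) = {m+1} := by
      rw [← Finset.Icc_add_one_left_eq_Ioc, Finset.Icc_self]
    have := Finset.prod_Ioc_consecutive a (Nat.le_succ m) hmk
    rwa [h1, Finset.prod_singleton] at this
  have hdiv : (∏ i ∈ Finset.Ioc m k, (a i / b i))
      = (∏ i ∈ Finset.Ioc m k, a i) / (∏ i ∈ Finset.Ioc m k, b i) :=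
    Finset.prod_div_distrib _ _
  rw [hIoc (m+1), hIoc m]
  rw [hdiv, ← hasplit] at hsplit
  field_simp at hsplit ⊢
  linarith [hsplit]

lemma beta_lower (ha : ∀ k, 1 ≤ k → 0 < a k) (hb : ∀ k, 1 ≤ k → 0 < b k)
    {A : ℝ} (hA : ∀ j, alphaSeq a b j ≤ A) {k : ℕ} (hk : 1 ≤ k) :
    alphaSeq a b k / A * (∑ j ∈ Finset.Icc 1 k, 1 / a j) ≤ betaSeq a b k := by
  have hA0 : 0 < A := lt_of_lt_of_le (alpha_pos ha hb 0) (hA 0)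
  have hαk : 0 < alphaSeq a b k := alpha_pos ha hb k
  rw [Finset.mul_sum]
  unfold betaSeq
  apply Finset.sum_le_sum
  intro j hj
  rw [Finset.mem_Icc] at hj
  obtain ⟨m, rfl⟩ := Nat.exists_eq_add_of_le hj.1
  rw [add_comm 1 m] at hj ⊢
  rw [term_eq ha hb hj.2]
  have ham1 : 0 < a (m+1) := ha (m+1) (Nat.le_add_left 1 m)
  have hαm : 0 < alphaSeq a b m := alpha_pos ha hb m
  rw [div_mul_div_comm, mul_one]
  apply div_le_div_of_nonneg_left hαk.le (by positivity)
  exact mul_le_mul_of_nonneg_right (hA m) ham1.le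

end Stmt8Aux

/-- Under (A0) and (A1) (the series of 1/a_k diverges), either 𝒱 has at most
one element, or v0 = 0. -/
theorem stmt8 (a b : ℕ → ℝ) (ha : ∀ k, 1 ≤ k → 0 < a k) (hb : ∀ k, 1 ≤ k → 0 < b k)
    (hA1 : ¬ Summable (fun k : ℕ => 1 / a (k+1)))
    (v0 : ℝ)
    (hv0 : Filter.Tendsto (fun k => alphaSeq a b k / betaSeq a b k) Filter.atTop (𝓝 (-v0))) :
    (speedSet a b).Subsingleton ∨ v0 = 0 := by
  by_cases hsub : (speedSet a b).Subsingleton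
  · exact Or.inl hsub
  right
  rw [Set.not_subsingleton_iff] at hsub
  obtain ⟨v₁, hv₁, v₂, hv₂, hne⟩ := hsub
  have hvd : 0 < |v₁ - v₂| := abs_pos.mpr (sub_ne_zero.mpr hne)
  set M : ℝ := 1 / |v₁ - v₂| with hM
  -- bound on beta
  have hβbound : ∀ k, 1 ≤ k → betaSeq a b k ≤ M := by
    intro k hk
    have h1 := hv₁.2 k hk
    have h2 := hv₂.2 k hk
    simp only [Set.mem_Ioo] at h1 h2
    have hβk : 0 < betaSeq a b k := Stmt8Aux.beta_pos ha hb hk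
    have habs : |v₁ - v₂| * betaSeq a b k < 1 := by
      have : |(v₁ - v₂) * betaSeq a b k| < 1 := by
        rw [abs_lt]; constructor <;> nlinarith
      rwa [abs_mul, abs_of_pos hβk] at this
    rw [hM, le_div_iff₀ hvd]
    nlinarith
  -- bound on alpha
  set A : ℝ := 1 + |v₁| * M with hA
  have hM0 : 0 ≤ M := le_of_lt (by positivity)
  have hαbound : ∀ k, alphaSeq a b k ≤ A := by
    intro k
    rcases Nat.eq_zero_or_pos k with rfl | hk
    · have : alphaSeq a b 0 = 1 := by simp [alphaSeq]
      rw [this, hA]; nlinarith [abs_nonneg v₁]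
    · have h1 := hv₁.2 k hk
      simp only [Set.mem_Ioo] at h1
      have hβk : 0 < betaSeq a b k := Stmt8Aux.beta_pos ha hb hk
      have hβM := hβbound k hk
      have h3 : -(v₁ * betaSeq a b k) ≤ |v₁| * betaSeq a b k := by
        have := neg_le_abs (v₁ * betaSeq a b k)
        rwa [abs_mul, abs_of_pos hβk] at this
      have h4 : |v₁| * betaSeq a b k ≤ |v₁| * M :=
        mul_le_mul_of_nonneg_left hβM (abs_nonneg v₁)
      rw [hA]; nlinarith
  have hA0 : 0 < A := lt_of_lt_of_le (Stmt8Aux.alpha_pos ha hb 0) (hαbound 0)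
  -- divergence of partial sums T k
  set T : ℕ → ℝ := fun k => ∑ j ∈ Finset.Icc 1 k, 1 / a j with hT
  have hTdiv : Filter.Tendsto T Filter.atTop Filter.atTop := by
    have hnn : ∀ i : ℕ, 0 ≤ 1 / a (i+1) := fun i => le_of_lt (by
      exact div_pos one_pos (ha (i+1) (Nat.le_add_left 1 i)))
    have := (not_summable_iff_tendsto_nat_atTop_of_nonneg hnn).1 hA1
    have heq : ∀ k, T k = ∑ i ∈ Finset.range k, 1 / a (i+1) := by
      intro k
      rw [hT]
      simp only
      rw [← Finset.Ico_add_one_right_eq_Icc, Finset.sum_Ico_eq_sum_range, Nat.add_sub_cancel]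
      exact Finset.sum_congr rfl fun i _ => by rw [add_comm 1 i]
    rw [funext heq]
    exact this
  -- squeeze
  have hupper : Filter.Tendsto (fun k => A / T k) Filter.atTop (𝓝 0) :=
    Filter.Tendsto.div_atTop tendsto_const_nhds hTdiv
  have hzero : Filter.Tendsto (fun k => alphaSeq a b k / betaSeq a b k) Filter.atTop (𝓝 0) := by
    apply tendsto_of_tendsto_of_tendsto_of_le_of_le' tendsto_const_nhds hupper
    · filter_upwards [Filter.eventually_ge_atTop 1] with k hk
      exact le_of_lt (div_pos (Stmt8Aux.alpha_pos ha hb k) (Stmt8Aux.beta_pos ha hb hk))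
    · filter_upwards [Filter.eventually_ge_atTop 1] with k hk
      have hαk : 0 < alphaSeq a b k := Stmt8Aux.alpha_pos ha hb k
      have hβk : 0 < betaSeq a b k := Stmt8Aux.beta_pos ha hb hk
      have hTk : 0 < T k := by
        rw [hT]
        apply Finset.sum_pos
        · intro j hj
          rw [Finset.mem_Icc] at hj
          exact div_pos one_pos (ha j hj.1)
        · exact Finset.nonempty_Icc.mpr hk
      have hlow : alphaSeq a b k / A * T k ≤ betaSeq a b k :=
        Stmt8Aux.beta_lower ha hb hαbound hk
      have hlowpos : 0 < alphaSeq a b k / A * T k := by positivity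
      calc alphaSeq a b k / betaSeq a b k
          ≤ alphaSeq a b k / (alphaSeq a b k / A * T k) :=
            div_le_div_of_nonneg_left hαk.le hlowpos hlow
        _ = A / T k := by field_simp
  have := tendsto_nhds_unique hv0 hzero
  linarith
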